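/- arXiv:2507.17541 — 2 statements merged into one kernel-verified Lean document; each statement's English description precedes it below -/
import Mathlib

section
/- Let G be a finite simple graph with n vertices and m ≥ 1 edges, let T ≥ 1, let ω ≥ 0, and let 𝒢 be the temporal graph with lifetime T whose every snapshot equals G. Then q*_ω(𝒢) = (ω·n·(T−1) + 2·T·m·q*(G)) / (ω·n·(T−1) + 2·T·m). -/
open Finset
open scoped Classical

namespace TemporalModularity

noncomputable section

variable {V : Type*} [Fintype V] {P : Type*}

/-- Twice the number of edges of `G` with both endpoints in `A`
(the sum over ordered pairs of vertices of `A` of the adjacency indicator). -/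
def twoE (G : SimpleGraph V) (A : Finset V) : ℝ :=
  ∑ u ∈ A, ∑ v ∈ A, if G.Adj u v then (1 : ℝ) else 0

/-- The degree of `v` in `G`, as a real number. -/
def deg (G : SimpleGraph V) (v : V) : ℝ :=
  ∑ u : V, if G.Adj v u then (1 : ℝ) else 0

/-- The number of edges of `G` (half the sum of the degrees), as a real number. -/
def numEdges (G : SimpleGraph V) : ℝ := (∑ v : V, deg G v) / 2

/-- The volume of `A` in `G`: the sum of the degrees of the vertices of `A`. -/
def vol (G : SimpleGraph V) (A : Finset V) : ℝ := ∑ v ∈ A, deg G v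

/-- The part with label `p` of the vertex partition induced by the labelling `π`. -/
def part (π : V → P) (p : P) : Finset V := univ.filter fun v => π v = p

/-- `Σ_{A ∈ 𝒜} (2 e_G(A) − vol_G(A)² / (2m))`, where `𝒜` is the partition of the
vertices induced by the labelling `π` (empty parts contribute zero). -/
def snapTerm (G : SimpleGraph V) (π : V → P) : ℝ :=
  ∑ p ∈ univ.image π,
    (twoE G (part π p) - vol G (part π p) ^ 2 / (2 * numEdges G))

/-- The static modularity `q(G,𝒜) = Σ_{A ∈ 𝒜} (e(A)/m − vol(A)²/(4m²))` of the
partition induced by the labelling `π`. -/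
def staticQ (G : SimpleGraph V) (π : V → P) : ℝ :=
  ∑ p ∈ univ.image π,
    (twoE G (part π p) / (2 * numEdges G) -
      vol G (part π p) ^ 2 / (4 * numEdges G ^ 2))

/-- The maximum static modularity `q*(G)` over all vertex partitions (every partition
of `V` is induced by some labelling `V → V`). -/
def staticQStar (G : SimpleGraph V) : ℝ := ⨆ π : V → V, staticQ G π

/-- The loyalty contribution `L(𝒜)` of the temporal partition `π` with lifetime `T`. -/
def loyalty (T : ℕ) (π : V → ℕ → P) : ℝ :=
  ∑ v : V, ∑ t ∈ Icc 1 (T - 1), if π v t = π v (t + 1) then (1 : ℝ) else 0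

/-- The per-time loyalty `L(𝒜,t)` of the temporal partition `π`. -/
def loyaltyAt (π : V → ℕ → P) (t : ℕ) : ℝ :=
  ∑ v : V, if π v t = π v (t + 1) then (1 : ℝ) else 0

/-- The normalisation factor `μ_ω(𝒢) = ω n (T−1)/2 + Σ_t m_t`. -/
def mu (G : ℕ → SimpleGraph V) (T : ℕ) (ω : ℝ) : ℝ :=
  ω * (Fintype.card V) * ((T : ℝ) - 1) / 2 + ∑ t ∈ Icc 1 T, numEdges (G t)

/-- The non-normalised temporal modularity of the restriction of the temporal graph
`G` to the time interval `[a,b]`, for the partition `π`. -/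
def qTildeI (G : ℕ → SimpleGraph V) (a b : ℕ) (ω : ℝ) (π : V → ℕ → P) : ℝ :=
  (∑ t ∈ Icc a b, snapTerm (G t) fun v => π v t) +
    ω * ∑ v : V, ∑ t ∈ Icc a (b - 1), if π v t = π v (t + 1) then (1 : ℝ) else 0

/-- The non-normalised temporal modularity `q̃_ω(𝒢,𝒜)` of the partition `π` of the
temporal graph `G` with lifetime `T`. -/
def qTilde (G : ℕ → SimpleGraph V) (T : ℕ) (ω : ℝ) (π : V → ℕ → P) : ℝ :=
  qTildeI G 1 T ω π

/-- The temporal modularity `q_ω(𝒢,𝒜)` of the partition `π` of the temporal graph `G`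
with lifetime `T`. -/
def qTemp (G : ℕ → SimpleGraph V) (T : ℕ) (ω : ℝ) (π : V → ℕ → P) : ℝ :=
  qTilde G T ω π / (2 * mu G T ω)

/-- The temporal modularity `q*_ω(𝒢)`: the maximum of `q_ω(𝒢,𝒜)` over all partitions
(every partition of `V × [T]` is induced by some labelling into `ℕ`). -/
def qTempStar (G : ℕ → SimpleGraph V) (T : ℕ) (ω : ℝ) : ℝ :=
  ⨆ π : V → ℕ → ℕ, qTemp G T ω π

/-- The temporal `k`-modularity `q*_{k,ω}(𝒢)`: the maximum of `q_ω(𝒢,𝒜)` over all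
partitions into at most `k` parts. -/
def qTempStarK (G : ℕ → SimpleGraph V) (T : ℕ) (ω : ℝ) (k : ℕ) : ℝ :=
  ⨆ π : V → ℕ → Fin k, qTemp G T ω π

/-- The maximum non-normalised temporal modularity of the restriction of `G` to the
time interval `[a,b]`, over all partitions. -/
def qTildeStarI (G : ℕ → SimpleGraph V) (a b : ℕ) (ω : ℝ) : ℝ :=
  ⨆ π : V → ℕ → ℕ, qTildeI G a b ω π

/-- The non-normalised temporal modularity `q̃*_ω(𝒢)` of the temporal graph `G` with
lifetime `T`. -/
def qTildeStar (G : ℕ → SimpleGraph V) (T : ℕ) (ω : ℝ) : ℝ := qTildeStarI G 1 T ω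

/-- The maximum non-normalised temporal modularity of the restriction of `G` to `[a,b]`
over partitions into at most `c` parts. -/
def qTildeStarKI (G : ℕ → SimpleGraph V) (a b : ℕ) (ω : ℝ) (c : ℕ) : ℝ :=
  ⨆ π : V → ℕ → Fin c, qTildeI G a b ω π

/-- The non-normalised temporal `c`-modularity `q̃*_{c,ω}(𝒢)`. -/
def qTildeStarK (G : ℕ → SimpleGraph V) (T : ℕ) (ω : ℝ) (c : ℕ) : ℝ :=
  qTildeStarKI G 1 T ω c

end

section Aux

variable {V : Type*} [Fintype V] {P : Type*} {Q : Type*}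

lemma sum_parts_comp (σ : V → P) (f : P → Q)
    (hf : ∀ p ∈ univ.image σ, ∀ q ∈ univ.image σ, f p = f q → p = q)
    (F : Finset V → ℝ) :
    ∑ q ∈ univ.image (f ∘ σ), F (part (f ∘ σ) q) = ∑ p ∈ univ.image σ, F (part σ p) := by
  classical
  have himg : univ.image (f ∘ σ) = (univ.image σ).image f := (Finset.image_image).symm
  rw [himg, Finset.sum_image hf]
  refine Finset.sum_congr rfl fun p hp => ?_
  congr 1
  unfold part
  ext v
  simp only [mem_filter, mem_univ, true_and, Function.comp]
  constructor
  · intro h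
    exact hf _ (Finset.mem_image_of_mem σ (mem_univ v)) _ hp h
  · intro h; rw [h]

lemma snapTerm_comp (G : SimpleGraph V) (σ : V → P) (f : P → Q)
    (hf : ∀ p ∈ univ.image σ, ∀ q ∈ univ.image σ, f p = f q → p = q) :
    snapTerm G (f ∘ σ) = snapTerm G σ := by
  unfold snapTerm
  exact sum_parts_comp σ f hf (fun A => twoE G A - vol G A ^ 2 / (2 * numEdges G))

lemma staticQ_comp (G : SimpleGraph V) (σ : V → P) (f : P → Q)
    (hf : ∀ p ∈ univ.image σ, ∀ q ∈ univ.image σ, f p = f q → p = q) :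
    staticQ G (f ∘ σ) = staticQ G σ := by
  unfold staticQ
  exact sum_parts_comp σ f hf (fun A => twoE G A / (2 * numEdges G) - vol G A ^ 2 / (4 * numEdges G ^ 2))

lemma snapTerm_eq_mul (G : SimpleGraph V) (hm : numEdges G ≠ 0) (σ : V → P) :
    snapTerm G σ = 2 * numEdges G * staticQ G σ := by
  unfold snapTerm staticQ
  rw [Finset.mul_sum]
  refine Finset.sum_congr rfl fun p _ => ?_
  field_simp
  ring

lemma staticQ_le_staticQStar (G : SimpleGraph V) [Nonempty V] (σ : V → P) :
    staticQ G σ ≤ staticQStar G := by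
  classical
  set g : P → V := fun p => if h : ∃ v, σ v = p then h.choose else Classical.arbitrary V with hg
  have hgσ : ∀ p ∈ univ.image σ, σ (g p) = p := by
    intro p hp
    obtain ⟨v, _, hv⟩ := Finset.mem_image.mp hp
    have hex : ∃ v, σ v = p := ⟨v, hv⟩
    simp only [hg, dif_pos hex]
    exact hex.choose_spec
  have hinj : ∀ p ∈ univ.image σ, ∀ q ∈ univ.image σ, g p = g q → p = q := by
    intro p hp q hq h
    rw [← hgσ p hp, ← hgσ q hq, h]
  calc staticQ G σ = staticQ G (g ∘ σ) := (staticQ_comp G σ g hinj).symm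
    _ ≤ staticQStar G := le_ciSup ((Set.finite_range _).bddAbove) (g ∘ σ)

lemma exists_staticQ_max (G : SimpleGraph V) [Nonempty V] :
    ∃ ρ : V → V, staticQ G ρ = staticQStar G := by
  obtain ⟨ρ, hρ⟩ := Finite.exists_max (staticQ G : (V → V) → ℝ)
  exact ⟨ρ, le_antisymm (le_ciSup ((Set.finite_range _).bddAbove) ρ) (ciSup_le hρ)⟩

lemma numEdges_pos (G : SimpleGraph V) (hG : G.edgeSet.Nonempty) : 0 < numEdges G := by
  classical
  obtain ⟨e, he⟩ := hG
  induction e using Sym2.ind with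
  | _ u v =>
    rw [SimpleGraph.mem_edgeSet] at he
    have h0 : ∀ w : V, 0 ≤ deg G w := fun w =>
      Finset.sum_nonneg fun _ _ => by split <;> norm_num
    have hdeg : (1 : ℝ) ≤ deg G u := by
      have := Finset.single_le_sum (f := fun w => if G.Adj u w then (1 : ℝ) else 0)
        (fun w _ => by split <;> norm_num) (mem_univ v)
      simpa [deg, he] using this
    have hsum : (1 : ℝ) ≤ ∑ w : V, deg G w :=
      le_trans hdeg (Finset.single_le_sum (fun w _ => h0 w) (mem_univ u))
    unfold numEdges
    linarith

lemma loyalty_sum_le (T : ℕ) (hT : 1 ≤ T) (π : V → ℕ → P) :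
    ∑ v : V, ∑ t ∈ Icc 1 (T - 1), (if π v t = π v (t + 1) then (1 : ℝ) else 0) ≤
      (Fintype.card V : ℝ) * ((T : ℝ) - 1) := by
  have hle : ∑ v : V, ∑ t ∈ Icc 1 (T - 1), (if π v t = π v (t + 1) then (1 : ℝ) else 0) ≤
      ∑ _v : V, ∑ _t ∈ Icc 1 (T - 1), (1 : ℝ) := by
    refine Finset.sum_le_sum fun v _ => Finset.sum_le_sum fun t _ => ?_
    split <;> norm_num
  have heq : ∑ _v : V, ∑ _t ∈ Icc 1 (T - 1), (1 : ℝ) =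
      (Fintype.card V : ℝ) * ((T : ℝ) - 1) := by
    rw [Finset.sum_const, Finset.sum_const, Nat.card_Icc]
    simp only [Nat.add_sub_cancel, nsmul_eq_mul, smul_eq_mul, mul_one, Finset.card_univ]
    rw [Nat.cast_sub hT]
    norm_num
  linarith

end Aux


/-- If every snapshot of `𝒢` equals the static graph `G` with `n`
vertices and `m ≥ 1` edges, `T ≥ 1` and `ω ≥ 0`, then
`q*_ω(𝒢) = (ω n (T−1) + 2 T m q*(G)) / (ω n (T−1) + 2 T m)`. -/
theorem temporalModularity_constant_snapshots_formula {V : Type*} [Fintype V]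
    (G : SimpleGraph V) (hG : G.edgeSet.Nonempty)
    (T : ℕ) (hT : 1 ≤ T) (ω : ℝ) (hω : 0 ≤ ω) :
    qTempStar (fun _ => G) T ω =
      (ω * (Fintype.card V : ℝ) * ((T : ℝ) - 1) +
          2 * (T : ℝ) * numEdges G * staticQStar G) /
        (ω * (Fintype.card V : ℝ) * ((T : ℝ) - 1) + 2 * (T : ℝ) * numEdges G) := by
  classical
  have hne : Nonempty V := by
    obtain ⟨e, he⟩ := hG
    induction e using Sym2.ind with | _ u v => exact ⟨u⟩
  have hm : 0 < numEdges G := numEdges_pos G hG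
  have hT1 : (1 : ℝ) ≤ (T : ℝ) := by exact_mod_cast hT
  have hn0 : (0 : ℝ) ≤ (Fintype.card V : ℝ) := Nat.cast_nonneg _
  set n : ℝ := (Fintype.card V : ℝ) with hn
  set m : ℝ := numEdges G with hmdef
  set qs : ℝ := staticQStar G with hqs
  set D : ℝ := ω * n * ((T : ℝ) - 1) + 2 * (T : ℝ) * m with hDdef
  have hDpos : 0 < D := by
    have h1 : 0 ≤ ω * n * ((T : ℝ) - 1) := by
      apply mul_nonneg (mul_nonneg hω hn0); linarith
    have h2 : 0 < 2 * (T : ℝ) * m := by nlinarith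
    rw [hDdef]; linarith
  have hTm1 : ((T - 1 : ℕ) : ℝ) = (T : ℝ) - 1 := by
    rw [Nat.cast_sub hT]; norm_num
  have h2mu : 2 * mu (fun _ : ℕ => G) T ω = D := by
    unfold mu
    rw [Finset.sum_const, Nat.card_Icc]
    simp only [Nat.add_sub_cancel, nsmul_eq_mul]
    rw [hDdef, ← hmdef, ← hn]
    ring
  have hval : ∀ π : V → ℕ → ℕ, qTemp (fun _ : ℕ => G) T ω π =
      qTilde (fun _ : ℕ => G) T ω π / D := by
    intro π; unfold qTemp; rw [h2mu]
  -- upper bound on qTilde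
  have hub : ∀ π : V → ℕ → ℕ, qTilde (fun _ : ℕ => G) T ω π ≤
      ω * n * ((T : ℝ) - 1) + 2 * (T : ℝ) * m * qs := by
    intro π
    unfold qTilde qTildeI
    have h1 : ∑ t ∈ Icc 1 T, snapTerm G (fun v => π v t) ≤
        ∑ _t ∈ Icc 1 T, 2 * m * qs := by
      refine Finset.sum_le_sum fun t _ => ?_
      rw [snapTerm_eq_mul G hm.ne' _]
      have := staticQ_le_staticQStar G (fun v => π v t)
      nlinarith
    have h1' : ∑ _t ∈ Icc 1 T, 2 * m * qs = (T : ℝ) * (2 * m * qs) := by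
      rw [Finset.sum_const, Nat.card_Icc]
      simp [nsmul_eq_mul]
    have h2 := loyalty_sum_le (V := V) (P := ℕ) T hT π
    have h3 := mul_le_mul_of_nonneg_left h2 hω
    have h4 := h1.trans_eq h1'
    have h5 : (T : ℝ) * (2 * m * qs) = 2 * (T : ℝ) * m * qs := by ring
    simp only [← hmdef]
    linarith
  -- the optimal constant partition
  obtain ⟨ρ, hρ⟩ := exists_staticQ_max G
  set eV : V → ℕ := fun v => (Fintype.equivFin V v : ℕ) with heV
  have heinj : Function.Injective eV := fun a b h =>
    (Fintype.equivFin V).injective (Fin.val_injective h)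
  set π₀ : V → ℕ → ℕ := fun v _ => eV (ρ v) with hπ₀
  have hsnap : ∀ t : ℕ, snapTerm G (fun v => π₀ v t) = 2 * m * qs := by
    intro t
    have hfe : (fun v => π₀ v t) = eV ∘ ρ := rfl
    rw [hfe, snapTerm_comp G ρ eV (fun p _ q _ h => heinj h),
      snapTerm_eq_mul G hm.ne', hρ]
  have hq0 : qTilde (fun _ : ℕ => G) T ω π₀ =
      ω * n * ((T : ℝ) - 1) + 2 * (T : ℝ) * m * qs := by
    unfold qTilde qTildeI
    rw [Finset.sum_congr rfl (fun t _ => hsnap t)]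
    simp only [hπ₀, eq_self_iff_true, if_true, Finset.sum_const, Nat.card_Icc,
      Nat.add_sub_cancel, nsmul_eq_mul, smul_eq_mul, mul_one, Finset.card_univ]
    rw [hTm1, ← hn]
    ring
  -- conclude
  have hbdd : BddAbove (Set.range (qTemp (fun _ : ℕ => G) T ω : (V → ℕ → ℕ) → ℝ)) := by
    refine ⟨(ω * n * ((T : ℝ) - 1) + 2 * (T : ℝ) * m * qs) / D, ?_⟩
    rintro x ⟨π, rfl⟩
    rw [hval]
    exact div_le_div_of_nonneg_right (hub π) hDpos.le
  unfold qTempStar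
  apply le_antisymm
  · refine ciSup_le fun π => ?_
    rw [hval]
    exact div_le_div_of_nonneg_right (hub π) hDpos.le
  · have hπ0val : qTemp (fun _ : ℕ => G) T ω π₀ =
        (ω * n * ((T : ℝ) - 1) + 2 * (T : ℝ) * m * qs) / D := by
      rw [hval, hq0]
    rw [← hπ0val]
    exact le_ciSup hbdd π₀

end TemporalModularity
end

section
/- Let 𝒢 be a temporal graph with lifetime T in which every snapshot has at least one edge, let ω ≥ 0, and let d be a positive integer. Then there exist integers 0 = t_0 < t_1 < ⋯ < t_ℓ = T such that t_j − t_{j−1} ≤ 2d for each 1 ≤ j ≤ ℓ and Σ_{i=1}^ℓ q̃*_ω(𝒢_{[t_{i−1}+1,t_i]}) ≥ (1 − 1/d)·q̃*_ω(𝒢). -/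
open Finset
open scoped Classical

namespace TemporalModularity

section Aux

variable {V : Type*} [Fintype V] {P : Type*}

lemma deg_nonneg (G : SimpleGraph V) (v : V) : 0 ≤ deg G v := by
  refine Finset.sum_nonneg fun u _ => ?_
  split_ifs <;> norm_num

lemma numEdges_nonneg (G : SimpleGraph V) : 0 ≤ numEdges G :=
  div_nonneg (Finset.sum_nonneg fun v _ => deg_nonneg G v) (by norm_num)

lemma twoE_le (G : SimpleGraph V) (A : Finset V) :
    twoE G A ≤ (Fintype.card V : ℝ) ^ 2 := by
  have hcard : (A.card : ℝ) ≤ (Fintype.card V : ℝ) := by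
    exact_mod_cast A.card_le_univ
  calc twoE G A ≤ ∑ _u ∈ A, ∑ _v ∈ A, (1 : ℝ) := by
        refine Finset.sum_le_sum fun u _ => Finset.sum_le_sum fun v _ => ?_
        split_ifs <;> norm_num
    _ = (A.card : ℝ) * (A.card : ℝ) := by
        simp [Finset.sum_const, nsmul_eq_mul]
    _ ≤ (Fintype.card V : ℝ) * (Fintype.card V : ℝ) := by
        have h0 : (0 : ℝ) ≤ (A.card : ℝ) := by positivity
        nlinarith
    _ = (Fintype.card V : ℝ) ^ 2 := by ring

lemma snapTerm_le (G : SimpleGraph V) (π : V → P) :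
    snapTerm G π ≤ (Fintype.card V : ℝ) ^ 3 := by
  have h1 : ∀ p ∈ univ.image π,
      twoE G (part π p) - vol G (part π p) ^ 2 / (2 * numEdges G)
        ≤ (Fintype.card V : ℝ) ^ 2 := by
    intro p _
    have h2 : (0 : ℝ) ≤ vol G (part π p) ^ 2 / (2 * numEdges G) :=
      div_nonneg (sq_nonneg _) (by linarith [numEdges_nonneg G])
    have h3 := twoE_le G (part π p)
    linarith
  have hcard : ((univ.image π).card : ℝ) ≤ (Fintype.card V : ℝ) := by
    exact_mod_cast le_trans (Finset.card_image_le) (le_of_eq (Finset.card_univ))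
  calc snapTerm G π ≤ ∑ _p ∈ univ.image π, (Fintype.card V : ℝ) ^ 2 :=
        Finset.sum_le_sum h1
    _ = ((univ.image π).card : ℝ) * (Fintype.card V : ℝ) ^ 2 := by
        simp [Finset.sum_const, nsmul_eq_mul]
    _ ≤ (Fintype.card V : ℝ) * (Fintype.card V : ℝ) ^ 2 := by
        have h0 : (0 : ℝ) ≤ (Fintype.card V : ℝ) ^ 2 := by positivity
        nlinarith
    _ = (Fintype.card V : ℝ) ^ 3 := by ring

lemma loyaltyAt_le (π : V → ℕ → P) (t : ℕ) :
    loyaltyAt π t ≤ (Fintype.card V : ℝ) := by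
  calc loyaltyAt π t ≤ ∑ _v : V, (1 : ℝ) := by
        refine Finset.sum_le_sum fun v _ => ?_
        split_ifs <;> norm_num
    _ = (Fintype.card V : ℝ) := by simp

lemma qTildeI_le (G : ℕ → SimpleGraph V) (a b : ℕ) (ω : ℝ) (hω : 0 ≤ ω)
    (π : V → ℕ → P) :
    qTildeI G a b ω π ≤ ((Icc a b).card : ℝ) * (Fintype.card V : ℝ) ^ 3
      + ω * ((Fintype.card V : ℝ) * ((Icc a (b - 1)).card : ℝ)) := by
  unfold qTildeI
  have h1 : (∑ t ∈ Icc a b, snapTerm (G t) fun v => π v t)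
      ≤ ((Icc a b).card : ℝ) * (Fintype.card V : ℝ) ^ 3 := by
    calc (∑ t ∈ Icc a b, snapTerm (G t) fun v => π v t)
        ≤ ∑ _t ∈ Icc a b, (Fintype.card V : ℝ) ^ 3 :=
          Finset.sum_le_sum fun t _ => snapTerm_le (G t) _
      _ = ((Icc a b).card : ℝ) * (Fintype.card V : ℝ) ^ 3 := by
          simp [Finset.sum_const, nsmul_eq_mul]
  have h2 : (∑ v : V, ∑ t ∈ Icc a (b - 1),
        if π v t = π v (t + 1) then (1 : ℝ) else 0)
      ≤ (Fintype.card V : ℝ) * ((Icc a (b - 1)).card : ℝ) := by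
    calc (∑ v : V, ∑ t ∈ Icc a (b - 1),
          if π v t = π v (t + 1) then (1 : ℝ) else 0)
        ≤ ∑ _v : V, ∑ _t ∈ Icc a (b - 1), (1 : ℝ) := by
          refine Finset.sum_le_sum fun v _ => Finset.sum_le_sum fun t _ => ?_
          split_ifs <;> norm_num
      _ = (Fintype.card V : ℝ) * ((Icc a (b - 1)).card : ℝ) := by
          simp [Finset.sum_const, nsmul_eq_mul, mul_comm]
  have h3 : ω * (∑ v : V, ∑ t ∈ Icc a (b - 1),
        if π v t = π v (t + 1) then (1 : ℝ) else 0)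
      ≤ ω * ((Fintype.card V : ℝ) * ((Icc a (b - 1)).card : ℝ)) :=
    mul_le_mul_of_nonneg_left h2 hω
  linarith

lemma qTildeI_bdd (G : ℕ → SimpleGraph V) (a b : ℕ) (ω : ℝ) (hω : 0 ≤ ω) :
    BddAbove (Set.range fun π : V → ℕ → ℕ => qTildeI G a b ω π) := by
  refine ⟨((Icc a b).card : ℝ) * (Fintype.card V : ℝ) ^ 3
      + ω * ((Fintype.card V : ℝ) * ((Icc a (b - 1)).card : ℝ)), ?_⟩
  rintro x ⟨π, rfl⟩
  exact qTildeI_le G a b ω hω π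

lemma sum_Icc_split (f : ℕ → ℝ) {a c b : ℕ} (h1 : a ≤ c + 1) (h2 : c ≤ b) :
    ∑ t ∈ Icc a b, f t = (∑ t ∈ Icc a c, f t) + ∑ t ∈ Icc (c + 1) b, f t := by
  rw [← Finset.sum_union]
  · congr 1
    ext x
    simp only [Finset.mem_union, Finset.mem_Icc]
    omega
  · rw [Finset.disjoint_left]
    intro x hx hx'
    simp only [Finset.mem_Icc] at hx hx'
    omega

lemma qTildeI_split (G : ℕ → SimpleGraph V) (ω : ℝ) (π : V → ℕ → P) {a c b : ℕ}
    (ha : 1 ≤ a) (hac : a ≤ c) (hcb : c < b) :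
    qTildeI G a b ω π =
      qTildeI G a c ω π + qTildeI G (c + 1) b ω π + ω * loyaltyAt π c := by
  unfold qTildeI loyaltyAt
  have hsnap := sum_Icc_split (fun t => snapTerm (G t) fun v => π v t)
    (a := a) (c := c) (b := b) (by omega) (by omega)
  have hc1 : c - 1 + 1 = c := by omega
  have hloy : ∀ v : V,
      (∑ t ∈ Icc a (b - 1), if π v t = π v (t + 1) then (1 : ℝ) else 0)
      = (∑ t ∈ Icc a (c - 1), if π v t = π v (t + 1) then (1 : ℝ) else 0)
        + ((if π v c = π v (c + 1) then (1 : ℝ) else 0)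
          + ∑ t ∈ Icc (c + 1) (b - 1),
              if π v t = π v (t + 1) then (1 : ℝ) else 0) := by
    intro v
    rw [sum_Icc_split (fun t => if π v t = π v (t + 1) then (1 : ℝ) else 0)
      (a := a) (c := c - 1) (b := b - 1) (by omega) (by omega), hc1]
    rw [sum_Icc_split (fun t => if π v t = π v (t + 1) then (1 : ℝ) else 0)
      (a := c) (c := c) (b := b - 1) (by omega) (by omega)]
    rw [Finset.Icc_self, Finset.sum_singleton]
  rw [hsnap, Finset.sum_congr rfl fun v _ => hloy v]
  rw [Finset.sum_add_distrib, Finset.sum_add_distrib]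
  ring

lemma snapTerm_const (G : SimpleGraph V) (hG : G.edgeSet.Nonempty) :
    snapTerm G (fun _ : V => (0 : ℕ)) = 0 := by
  obtain ⟨e, he⟩ := hG
  induction e using Sym2.ind with
  | _ u v =>
  rw [SimpleGraph.mem_edgeSet] at he
  have hdeg : (1 : ℝ) ≤ deg G u := by
    unfold deg
    calc (1 : ℝ) = if G.Adj u v then (1 : ℝ) else 0 := by simp [he]
      _ ≤ ∑ w : V, if G.Adj u w then (1 : ℝ) else 0 :=
          Finset.single_le_sum (f := fun w => if G.Adj u w then (1 : ℝ) else 0)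
            (fun w _ => by by_cases h : G.Adj u w <;> simp [h]) (mem_univ v)
  have hS : (0 : ℝ) < ∑ w : V, deg G w := by
    calc (0 : ℝ) < 1 := one_pos
      _ ≤ deg G u := hdeg
      _ ≤ ∑ w : V, deg G w :=
          Finset.single_le_sum (fun w _ => deg_nonneg G w) (mem_univ u)
  have hpart : part (fun _ : V => (0 : ℕ)) 0 = univ := by
    unfold part; simp
  unfold snapTerm
  rw [Finset.sum_eq_single_of_mem (0 : ℕ) (by simp; exact ⟨u⟩)
    (fun b hb hb0 => by simp at hb; omega), hpart]
  have h2 : twoE G univ = ∑ w : V, deg G w := rfl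
  have h3 : vol G univ = ∑ w : V, deg G w := rfl
  have h4 : numEdges G = (∑ w : V, deg G w) / 2 := rfl
  rw [h2, h3, h4]
  field_simp
  ring

lemma qTildeI_const (G : ℕ → SimpleGraph V) (T : ℕ) (ω : ℝ)
    (hE : ∀ t ∈ Icc 1 T, (G t).edgeSet.Nonempty) :
    qTildeI G 1 T ω (fun _ _ => (0 : ℕ)) =
      ω * (Fintype.card V : ℝ) * ((T - 1 : ℕ) : ℝ) := by
  unfold qTildeI
  have h1 : ∀ t ∈ Icc 1 T, (snapTerm (G t) fun v => (fun (_ : V) (_ : ℕ) => (0 : ℕ)) v t) = 0 := by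
    intro t ht
    exact snapTerm_const (G t) (hE t ht)
  rw [Finset.sum_congr rfl h1]
  simp [Finset.sum_const, nsmul_eq_mul, Nat.card_Icc]
  ring

lemma key (G : ℕ → SimpleGraph V) (ω : ℝ) (hω : 0 ≤ ω) (π : V → ℕ → ℕ) :
    ∀ (ℓ : ℕ) (t : ℕ → ℕ), t 0 = 0 → (∀ i < ℓ, t i < t (i + 1)) →
    qTildeI G 1 (t ℓ) ω π ≤
      (∑ i ∈ Finset.range ℓ, qTildeI G (t i + 1) (t (i + 1)) ω π)
        + ω * (Fintype.card V : ℝ) * ((ℓ - 1 : ℕ) : ℝ) := by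
  intro ℓ
  induction ℓ with
  | zero =>
    intro t ht0 _
    rw [ht0]
    have hz : qTildeI G 1 0 ω π = 0 := by
      unfold qTildeI
      simp
    simp [hz]
  | succ ℓ ih =>
    intro t ht0 hinc
    rcases Nat.eq_zero_or_pos ℓ with hℓ | hℓ
    · subst hℓ
      rw [Finset.sum_range_one, ht0]
      simp
    · have hmono : ∀ j, j ≤ ℓ → j ≤ t j := by
        intro j hj
        induction j with
        | zero => omega
        | succ k ihk =>
          have h1 := hinc k (by omega)
          have h2 := ihk (by omega)
          omega
      have h1 : 1 ≤ t ℓ := le_trans hℓ (hmono ℓ le_rfl)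
      have hsplit := qTildeI_split G ω π (a := 1) (c := t ℓ) (b := t (ℓ + 1))
        le_rfl h1 (hinc ℓ (by omega))
      have hIH := ih t ht0 (fun i hi => hinc i (by omega))
      have hloy := loyaltyAt_le π (t ℓ)
      have hωloy : ω * loyaltyAt π (t ℓ) ≤ ω * (Fintype.card V : ℝ) :=
        mul_le_mul_of_nonneg_left hloy hω
      rw [Finset.sum_range_succ]
      have hcast : ((ℓ + 1 - 1 : ℕ) : ℝ) = ((ℓ - 1 : ℕ) : ℝ) + 1 := by
        have h5 : ℓ + 1 - 1 = (ℓ - 1) + 1 := by omega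
        rw [h5]
        push_cast
        ring
      rw [hcast]
      linarith

end Aux


/-- For any positive integer `d` there exist
`0 = t_0 < t_1 < ⋯ < t_ℓ = T` with `t_j − t_{j−1} ≤ 2d` for each `j`, such that
`Σ_{i=1}^ℓ q̃*_ω(𝒢_{[t_{i−1}+1,t_i]}) ≥ (1 − 1/d)·q̃*_ω(𝒢)`. -/
theorem qTildeStar_interval_lower_bound {V : Type*} [Fintype V]
    (T : ℕ) (hT : 1 ≤ T) (G : ℕ → SimpleGraph V)
    (hE : ∀ t ∈ Icc 1 T, (G t).edgeSet.Nonempty)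
    (ω : ℝ) (hω : 0 ≤ ω) (d : ℕ) (hd : 1 ≤ d) :
    ∃ (ℓ : ℕ) (t : ℕ → ℕ), 1 ≤ ℓ ∧ t 0 = 0 ∧ t ℓ = T ∧
      (∀ i < ℓ, t i < t (i + 1) ∧ t (i + 1) - t i ≤ 2 * d) ∧
      (1 - 1 / (d : ℝ)) * qTildeStar G T ω ≤
        ∑ i ∈ Finset.range ℓ, qTildeStarI G (t i + 1) (t (i + 1)) ω := by
  classical
  obtain ⟨k, hk⟩ : ∃ k, k = (T - 1) / (2 * d) := ⟨_, rfl⟩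
  set t : ℕ → ℕ := fun i => min (2 * d * i) T with htdef
  have h1 : 2 * d * k + (T - 1) % (2 * d) = T - 1 := by
    rw [hk]; exact Nat.div_add_mod (T - 1) (2 * d)
  have hmod : (T - 1) % (2 * d) < 2 * d := Nat.mod_lt _ (by omega)
  have hkb : 2 * d * k ≤ T - 1 := Nat.le.intro h1
  have ht0 : t 0 = 0 := by simp [htdef]
  have htl : t (k + 1) = T := by
    have hmul : 2 * d * (k + 1) = 2 * d * k + 2 * d := Nat.mul_succ (2 * d) k
    have hT2 : T ≤ 2 * d * (k + 1) := by
      rw [hmul]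
      generalize 2 * d * k = A at h1 ⊢
      omega
    simpa [htdef] using min_eq_right hT2
  have hstep : ∀ i < k + 1, t i < t (i + 1) ∧ t (i + 1) - t i ≤ 2 * d := by
    intro i hi
    have hle : 2 * d * i ≤ 2 * d * k := Nat.mul_le_mul le_rfl (by omega)
    have hBT : 2 * d * i ≤ T - 1 := le_trans hle hkb
    have hmul : 2 * d * (i + 1) = 2 * d * i + 2 * d := Nat.mul_succ (2 * d) i
    simp only [htdef, hmul]
    generalize 2 * d * i = B at hBT ⊢
    omega
  have hinc : ∀ i < k + 1, t i < t (i + 1) := fun i hi => (hstep i hi).1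
  refine ⟨k + 1, t, Nat.le_add_left 1 k, ht0, htl, hstep, ?_⟩
  have hbdd : ∀ a b : ℕ,
      BddAbove (Set.range fun π : V → ℕ → ℕ => qTildeI G a b ω π) :=
    fun a b => qTildeI_bdd G a b ω hω
  have hlow : ω * (Fintype.card V : ℝ) * ((T - 1 : ℕ) : ℝ) ≤ qTildeStar G T ω := by
    have h5 := le_ciSup (hbdd 1 T) (fun (_ : V) (_ : ℕ) => (0 : ℕ))
    rw [qTildeI_const G T ω hE] at h5
    exact h5
  have hkey : qTildeStar G T ω ≤
      (∑ i ∈ Finset.range (k + 1), qTildeStarI G (t i + 1) (t (i + 1)) ω)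
        + ω * (Fintype.card V : ℝ) * (k : ℝ) := by
    rw [qTildeStar, qTildeStarI]
    apply ciSup_le
    intro π
    have h := key G ω hω π (k + 1) t ht0 hinc
    rw [htl] at h
    have hcast : ((k + 1 - 1 : ℕ) : ℝ) = (k : ℝ) := by norm_num
    rw [hcast] at h
    refine le_trans h (add_le_add_left (Finset.sum_le_sum fun i _ => ?_) _)
    exact le_ciSup (hbdd (t i + 1) (t (i + 1))) π
  have hd1 : (1 : ℝ) ≤ (d : ℝ) := by exact_mod_cast hd
  have hdpos : (0 : ℝ) < (d : ℝ) := by linarith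
  have hkd : (k : ℝ) * (d : ℝ) ≤ ((T - 1 : ℕ) : ℝ) := by
    have h6 : k * d ≤ T - 1 := by
      calc k * d ≤ 2 * d * k := by
            calc k * d ≤ k * (2 * d) := Nat.mul_le_mul le_rfl (by omega)
              _ = 2 * d * k := by ring
        _ ≤ T - 1 := hkb
    exact_mod_cast h6
  have hn0 : (0 : ℝ) ≤ ω * (Fintype.card V : ℝ) := by positivity
  have hstep2 : ω * (Fintype.card V : ℝ) * (k : ℝ) ≤ qTildeStar G T ω / (d : ℝ) := by
    rw [le_div_iff₀ hdpos]
    calc ω * (Fintype.card V : ℝ) * (k : ℝ) * (d : ℝ)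
        = ω * (Fintype.card V : ℝ) * ((k : ℝ) * (d : ℝ)) := by ring
      _ ≤ ω * (Fintype.card V : ℝ) * ((T - 1 : ℕ) : ℝ) :=
          mul_le_mul_of_nonneg_left hkd hn0
      _ ≤ qTildeStar G T ω := hlow
  have hring : (1 - 1 / (d : ℝ)) * qTildeStar G T ω
      = qTildeStar G T ω - qTildeStar G T ω / (d : ℝ) := by
    field_simp
  rw [hring]
  linarith

end TemporalModularity
end
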